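/- For independent Bernoulli random variables b_1,...,b_n, vectors x_i ∈ R^d and a psd matrix A such that ∑_i E[b_i] x_i x_iᵀ + A is invertible, the expected adjugate satisfies E[adj(∑_i b_i x_i x_iᵀ + A)] = adj(∑_i E[b_i] x_i x_iᵀ + A), where adj denotes the classical adjugate matrix. -/

import Mathlib

open Matrix BigOperators


lemma det_expand (d : ℕ) (B : Matrix (Fin d) (Fin d) ℝ) (c : Fin d → ℝ) (x : Fin d → ℝ) :
    (Matrix.of (fun k => B k + c k • x)).det
      = B.det + ∑ k, c k * (B.updateRow k x).det := by
  classical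
  set f := (detRowAlternating (R := ℝ) (n := Fin d)) with hf
  set m := (fun k : Fin d => c k • x) with hm
  have key : (Matrix.of (fun k => B k + c k • x) : Matrix (Fin d) (Fin d) ℝ)
      = Matrix.of (m + fun k => B k) := by
    ext k l; simp [hm, add_comm]
  rw [key]
  show f.toMultilinearMap (m + fun k => B k) = _
  rw [f.toMultilinearMap.map_add_univ m (fun k => B k)]
  simp only [AlternatingMap.coe_multilinearMap]
  have hzero : ∀ s : Finset (Fin d), 2 ≤ s.card →
      f (s.piecewise m (fun k => B k)) = 0 := by
    intro s hs
    obtain ⟨k1, hk1, k2, hk2, hne⟩ := Finset.one_lt_card.mp (by omega : 1 < s.card)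
    set v := s.piecewise m (fun k => B k) with hv
    have h1 : v k1 = c k1 • x := Finset.piecewise_eq_of_mem _ _ _ hk1
    have h2 : v k2 = c k2 • x := Finset.piecewise_eq_of_mem _ _ _ hk2
    have e1 : f v = c k1 • f (Function.update v k1 x) := by
      conv_lhs => rw [← Function.update_eq_self k1 v, h1]
      exact f.map_update_smul v k1 (c k1) x
    set w := Function.update v k1 x with hw
    have hw2 : w k2 = c k2 • x := by
      rw [hw, Function.update_of_ne hne.symm, h2]
    have e2 : f w = c k2 • f (Function.update w k2 x) := by
      conv_lhs => rw [← Function.update_eq_self k2 w, hw2]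
      exact f.map_update_smul w k2 (c k2) x
    have e3 : f (Function.update w k2 x) = 0 := by
      refine f.map_eq_zero_of_eq _ (?_ : _ = _) hne
      rw [Function.update_of_ne hne, hw, Function.update_self, Function.update_self]
    rw [e1, e2, e3, smul_zero, smul_zero]
  have hsplit : Finset.univ.filter (fun s : Finset (Fin d) => s.card ≤ 1)
      = insert (∅ : Finset (Fin d)) (Finset.univ.image fun k : Fin d => {k}) := by
    ext s
    simp only [Finset.mem_filter, Finset.mem_univ, true_and, Finset.mem_insert,
      Finset.mem_image]
    constructor
    · intro h
      rcases Nat.le_one_iff_eq_zero_or_eq_one.mp h with h0 | h1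
      · exact Or.inl (Finset.card_eq_zero.mp h0)
      · obtain ⟨a, ha⟩ := Finset.card_eq_one.mp h1
        exact Or.inr ⟨a, ha.symm⟩
    · rintro (rfl | ⟨a, rfl⟩) <;> simp
  have hsum : ∑ s : Finset (Fin d), f (s.piecewise m (fun k => B k))
      = ∑ s ∈ Finset.univ.filter (fun s : Finset (Fin d) => s.card ≤ 1),
          f (s.piecewise m (fun k => B k)) := by
    refine (Finset.sum_subset (Finset.filter_subset _ _) ?_).symm
    intro s _ hs
    simp only [Finset.mem_filter, Finset.mem_univ, true_and, not_le] at hs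
    exact hzero s hs
  rw [hsum, hsplit, Finset.sum_insert (by simp [Finset.eq_empty_iff_forall_notMem]),
    Finset.sum_image (fun a _ b _ h => Finset.singleton_injective h)]
  have h0 : f ((∅ : Finset (Fin d)).piecewise m fun k => B k) = B.det := by
    rw [Finset.piecewise_empty]; rfl
  have h1 : ∀ k : Fin d, f (({k} : Finset (Fin d)).piecewise m fun k => B k)
      = c k * (B.updateRow k x).det := by
    intro k
    rw [Finset.piecewise_singleton]
    have hupdate : Function.update (fun j : Fin d => B j) k x
        = (fun j => B.updateRow k x j) := by
      funext j
      by_cases h : j = k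
      · subst h; simp
      · simp [Function.update_of_ne h, Matrix.updateRow_ne h]
    calc f (Function.update (fun j : Fin d => B j) k (c k • x))
        = c k • f (Function.update (fun j : Fin d => B j) k x) :=
          f.map_update_smul _ k (c k) x
      _ = c k * (B.updateRow k x).det := by rw [hupdate]; rfl
  rw [h0]
  exact congrArg (B.det + ·) (Finset.sum_congr rfl fun k _ => h1 k)

lemma adj_step (d : ℕ) (M : Matrix (Fin d) (Fin d) ℝ) (x : Fin d → ℝ) (t : ℝ) :
    (M + t • vecMulVec x x).adjugate
      = (1 - t) • M.adjugate + t • (M + vecMulVec x x).adjugate := by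
  ext i j
  have key : ∀ s : ℝ, ((M + s • vecMulVec x x).updateRow j (Pi.single i 1)).det
      = ((M.updateRow j (Pi.single i 1)).det
        + s * ∑ k, (if k = j then 0 else x k)
            * (((M.updateRow j (Pi.single i 1)).updateRow k x).det)) := by
    intro s
    have hrow : (M + s • vecMulVec x x).updateRow j (Pi.single i 1)
        = Matrix.of (fun k => (M.updateRow j (Pi.single i 1)) k
            + (if k = j then 0 else s * x k) • x) := by
      ext k l
      by_cases h : k = j
      · subst h; simp
      · simp [Matrix.updateRow_ne h, Matrix.add_apply, vecMulVec_apply, h,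
          mul_assoc, mul_comm, mul_left_comm]
        try ring
    rw [hrow, det_expand]
    rw [Finset.mul_sum]
    congr 1
    refine Finset.sum_congr rfl fun k _ => ?_
    by_cases h : k = j <;> simp [h] <;> try ring
  have h1 : (M + vecMulVec x x) = (M + (1:ℝ) • vecMulVec x x) := by rw [one_smul]
  rw [Matrix.adjugate_apply, Matrix.add_apply, Matrix.smul_apply, Matrix.smul_apply,
    Matrix.adjugate_apply, Matrix.adjugate_apply, h1, key, key, smul_eq_mul, smul_eq_mul]
  ring

lemma bern_aux (d : ℕ) : ∀ (n : ℕ) (x : Fin n → (Fin d → ℝ)) (p : Fin n → ℝ)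
    (A : Matrix (Fin d) (Fin d) ℝ),
    ∑ b : Fin n → Bool,
        (∏ i, (if b i then p i else 1 - p i)) •
          (∑ i, (if b i then (1 : ℝ) else 0) • vecMulVec (x i) (x i) + A).adjugate
      = (∑ i, p i • vecMulVec (x i) (x i) + A).adjugate := by
  intro n
  induction n with
  | zero => intro x p A; simp
  | succ n ih =>
    intro x p A
    have hre := Equiv.sum_comp (Fin.consEquiv (fun _ : Fin (n+1) => Bool))
      (fun b : Fin (n+1) → Bool => (∏ i, (if b i then p i else 1 - p i)) •
        (∑ i, (if b i then (1:ℝ) else 0) • vecMulVec (x i) (x i) + A).adjugate)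
    rw [← hre, Fintype.sum_prod_type]
    have hterm : ∀ (y : Bool) (c : Fin n → Bool),
        (∏ i, (if (Fin.cons y c : Fin (n+1) → Bool) i then p i else 1 - p i)) •
          (∑ i, (if (Fin.cons y c : Fin (n+1) → Bool) i then (1:ℝ) else 0) •
              vecMulVec (x i) (x i) + A).adjugate
        = (if y then p 0 else 1 - p 0) •
            ((∏ i, (if c i then p i.succ else 1 - p i.succ)) •
              (∑ i, (if c i then (1:ℝ) else 0) • vecMulVec (x i.succ) (x i.succ)
                + ((if y then (1:ℝ) else 0) • vecMulVec (x 0) (x 0) + A)).adjugate) := by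
      intro y c
      rw [Fin.prod_univ_succ, Fin.sum_univ_succ]
      simp only [Fin.cons_zero, Fin.cons_succ]
      have harr : (if y then (1:ℝ) else 0) • vecMulVec (x 0) (x 0)
            + ∑ i, (if c i then (1:ℝ) else 0) • vecMulVec (x i.succ) (x i.succ) + A
          = ∑ i, (if c i then (1:ℝ) else 0) • vecMulVec (x i.succ) (x i.succ)
            + ((if y then (1:ℝ) else 0) • vecMulVec (x 0) (x 0) + A) := by abel
      rw [harr, mul_smul]
    simp only [Fin.consEquiv_apply, hterm]
    simp only [← Finset.smul_sum]
    rw [Fintype.sum_bool]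
    simp only [ih (fun i => x i.succ) (fun i => p i.succ), if_true, if_false,
      Bool.false_eq_true, if_pos, ite_true, ite_false, zero_smul, zero_add, one_smul]
    have hM : (∑ i : Fin (n+1), p i • vecMulVec (x i) (x i) + A)
        = (∑ i : Fin n, p i.succ • vecMulVec (x i.succ) (x i.succ) + A)
          + p 0 • vecMulVec (x 0) (x 0) := by
      rw [Fin.sum_univ_succ]; abel
    have harr2 : (∑ i : Fin n, p i.succ • vecMulVec (x i.succ) (x i.succ)
          + (vecMulVec (x 0) (x 0) + A))
        = (∑ i : Fin n, p i.succ • vecMulVec (x i.succ) (x i.succ) + A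
          + vecMulVec (x 0) (x 0)) := by abel
    rw [hM, adj_step d _ (x 0) (p 0), harr2]
    exact add_comm _ _

/-- Expected adjugate over independent Bernoulli variables:
`E[adj(∑ i, b i • x i x iᵀ + A)] = adj(∑ i, p i • x i x iᵀ + A)`. -/
theorem bernoulli_expectation_adjugate
    (n d : ℕ) (x : Fin n → (Fin d → ℝ)) (p : Fin n → ℝ)
    (hp : ∀ i, p i ∈ Set.Icc (0 : ℝ) 1)
    (A : Matrix (Fin d) (Fin d) ℝ) (hA : A.PosSemidef)
    (hinv : IsUnit (∑ i, p i • vecMulVec (x i) (x i) + A).det) :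
    ∑ b : Fin n → Bool,
        (∏ i, (if b i then p i else 1 - p i)) •
          (∑ i, (if b i then (1 : ℝ) else 0) • vecMulVec (x i) (x i) + A).adjugate
      = (∑ i, p i • vecMulVec (x i) (x i) + A).adjugate :=
  bern_aux d n x p A
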